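/- Let g₁, g₂ ∈ L²(𝕊^{d-1}) with g₂ = g₂^♯ symmetric decreasing about e₁, g₁ not a.e. constant, and suppose |{g₂ = t}| = 0 for every t ∈ ℝ. If ∫_{𝕊^{d-1}} g₁ g₂ = ∫_{𝕊^{d-1}} g₁^♯ g₂^♯, then g₁ = g₁^♯, i.e., every superlevel set {g₁ > t} is (up to null sets) a geodesic cap centered at e₁. -/

import Mathlib

open MeasureTheory Metric Set
open scoped ENNReal RealInnerProductSpace

noncomputable section

abbrev Euc (d : ℕ) := EuclideanSpace ℝ (Fin d)

/-- The distinguished direction e₁ of ℝ^d (pole of the cap symmetrisation). -/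
def e1 (d : ℕ) : Euc d :=
  if h : 0 < d then EuclideanSpace.single (⟨0, h⟩ : Fin d) 1 else 0

/-- The (d-1)-dimensional Hausdorff measure on the sphere 𝕊^{d-1}_r of radius r. -/
def sphMeas (d : ℕ) (r : ℝ) : Measure (Euc d) :=
  (μH[(d : ℝ) - 1]).restrict (sphere (0 : Euc d) r)

/-- `IsCapSymm d f fs` expresses that `fs` is the cap symmetrisation `f^♯` of `f` on the
unit ball: on a.e. sphere 𝕊^{d-1}_r (0 < r ≤ 1), `fs` is equimeasurable with `f` and is
a symmetric nonincreasing function of the geodesic distance to r·e₁ (equivalently,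
nondecreasing in the inner product with e₁ at fixed radius). -/
def IsCapSymm (d : ℕ) (f fs : Euc d → ℝ) : Prop :=
  (∀ x y : Euc d, ‖x‖ = ‖y‖ → ⟪x, e1 d⟫ ≤ ⟪y, e1 d⟫ → fs x ≤ fs y) ∧
  ∀ᵐ r ∂(volume.restrict (Ioc (0 : ℝ) 1)), ∀ t : ℝ,
    sphMeas d r {x | t ≤ f x} = sphMeas d r {x | t ≤ fs x}

/-- `IsCapSymmSphere d g gs` expresses that `gs` is the symmetric decreasing
rearrangement (cap symmetrisation) `g^♯` of `g` on the unit sphere 𝕊^{d-1}, about e₁. -/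
def IsCapSymmSphere (d : ℕ) (g gs : Euc d → ℝ) : Prop :=
  (∀ x y : Euc d, x ∈ sphere (0 : Euc d) 1 → y ∈ sphere (0 : Euc d) 1 →
    ⟪x, e1 d⟫ ≤ ⟪y, e1 d⟫ → gs x ≤ gs y) ∧
  ∀ t : ℝ, sphMeas d 1 {x | t ≤ g x} = sphMeas d 1 {x | t ≤ gs x}

open Filter
open scoped NNReal

section AuxLemmas


variable {α : Type*} [MeasurableSpace α]

lemma upperSet_measurableSet [MeasurableSpace α] {T A : Set α} (hT : MeasurableSet T)
    {u : α → ℝ} (hu : Measurable u) (hAT : A ⊆ T)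
    (hA : ∀ x ∈ A, ∀ y ∈ T, u x ≤ u y → y ∈ A) : MeasurableSet A := by
  have hV : IsUpperSet {r : ℝ | ∃ x ∈ A, u x ≤ r} :=
    fun r r' hrr' ⟨x, hx, hxr⟩ => ⟨x, hx, hxr.trans hrr'⟩
  have hAe : A = T ∩ u ⁻¹' {r | ∃ x ∈ A, u x ≤ r} := by
    ext y; constructor
    · exact fun hy => ⟨hAT hy, y, hy, le_rfl⟩
    · rintro ⟨hyT, x, hxA, hxy⟩; exact hA x hxA y hyT hxy
  rw [hAe]
  exact hT.inter (hu hV.ordConnected.measurableSet)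

lemma integral_posPart_eq_of_dist {μ : Measure α} [IsFiniteMeasure μ]
    {g h : α → ℝ} (hg : Measurable g) (hh : Measurable h)
    (hdist : ∀ t : ℝ, μ {x | t ≤ g x} = μ {x | t ≤ h x}) (τ : ℝ) :
    ∫ x, max (g x - τ) 0 ∂μ = ∫ x, max (h x - τ) 0 ∂μ := by
  have key : ∀ k : α → ℝ, Measurable k →
      ∫⁻ x, ENNReal.ofReal (max (k x - τ) 0) ∂μ
        = ∫⁻ t in Ioi (0:ℝ), μ {x | τ + t ≤ k x} := by
    intro k hk
    have h0 : ∫⁻ x, ENNReal.ofReal (max (k x - τ) 0) ∂μ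
        = ∫⁻ t in Ioi (0:ℝ), μ {x | t ≤ max (k x - τ) 0} :=
      lintegral_eq_lintegral_meas_le μ (f := fun x => max (k x - τ) 0)
        (Eventually.of_forall fun x => le_max_right _ _)
        ((hk.sub measurable_const).max measurable_const).aemeasurable
    rw [h0]
    refine setLIntegral_congr_fun measurableSet_Ioi (fun t ht => ?_)
    congr 1
    ext x
    simp only [mem_setOf_eq, le_max_iff, mem_Ioi] at *
    constructor
    · rintro (hx | hx) <;> [linarith; linarith]
    · intro hx; left; linarith
  have L : ∫⁻ x, ENNReal.ofReal (max (g x - τ) 0) ∂μ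
      = ∫⁻ x, ENNReal.ofReal (max (h x - τ) 0) ∂μ := by
    rw [key g hg, key h hh]
    exact lintegral_congr fun t => hdist (τ + t)
  have Bg : ∫ x, max (g x - τ) 0 ∂μ = (∫⁻ x, ENNReal.ofReal (max (g x - τ) 0) ∂μ).toReal :=
    integral_eq_lintegral_of_nonneg_ae (Eventually.of_forall fun x => le_max_right _ _)
      ((hg.sub measurable_const).max measurable_const).aestronglyMeasurable
  have Bh : ∫ x, max (h x - τ) 0 ∂μ = (∫⁻ x, ENNReal.ofReal (max (h x - τ) 0) ∂μ).toReal :=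
    integral_eq_lintegral_of_nonneg_ae (Eventually.of_forall fun x => le_max_right _ _)
      ((hh.sub measurable_const).max measurable_const).aestronglyMeasurable
  rw [Bg, Bh, L]

lemma dist_lt_of_dist_le {μ : Measure α} {g h : α → ℝ}
    (hdist : ∀ t : ℝ, μ {x | t ≤ g x} = μ {x | t ≤ h x}) (t : ℝ) :
    μ {x | t < g x} = μ {x | t < h x} := by
  have hU : ∀ k : α → ℝ, {x | t < k x} = ⋃ n : ℕ, {x | t + 1/(n+1) ≤ k x} := by
    intro k
    ext x
    simp only [mem_setOf_eq, mem_iUnion]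
    constructor
    · intro hx
      obtain ⟨n, hn⟩ := exists_nat_one_div_lt (show (0:ℝ) < k x - t by linarith)
      exact ⟨n, by push_cast at hn ⊢; linarith⟩
    · rintro ⟨n, hn⟩
      have : (0:ℝ) < 1/(n+1) := by positivity
      linarith
  have hmono : ∀ k : α → ℝ, Monotone fun n : ℕ => {x | t + 1/(n+1:ℝ) ≤ k x} := by
    intro k n m hnm x hx
    simp only [mem_setOf_eq] at *
    have h1 : (1:ℝ)/(m+1) ≤ 1/(n+1) := by
      apply one_div_le_one_div_of_le (by positivity)
      push_cast; have := (Nat.cast_le (α := ℝ)).2 hnm; linarith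
    linarith
  rw [hU g, hU h, (hmono g).measure_iUnion, (hmono h).measure_iUnion]
  exact iSup_congr fun n => hdist _

lemma integral_eq_of_dist {μ : Measure α} [IsFiniteMeasure μ]
    {g h : α → ℝ} (hg : Measurable g) (hh : Measurable h)
    (hgi : Integrable g μ) (hhi : Integrable h μ)
    (hdist : ∀ t : ℝ, μ {x | t ≤ g x} = μ {x | t ≤ h x}) :
    ∫ x, g x ∂μ = ∫ x, h x ∂μ := by
  have hneg : ∀ t : ℝ, μ {x | t ≤ -g x} = μ {x | t ≤ -h x} := by
    intro t
    have hs : ∀ k : α → ℝ, {x | t ≤ -k x} = {x | -t < k x}ᶜ := by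
      intro k; ext x; simp only [mem_setOf_eq, mem_compl_iff, not_lt]; constructor <;> intro <;> linarith
    rw [hs g, hs h,
      measure_compl (measurableSet_lt measurable_const hg) (measure_ne_top μ _),
      measure_compl (measurableSet_lt measurable_const hh) (measure_ne_top μ _)]
    congr 1
    exact dist_lt_of_dist_le hdist (-t)
  have hgd : (fun x => g x) = fun x => max (g x - 0) 0 - max (-g x - 0) 0 := by
    funext x; simp only [sub_zero]; rcases le_total (g x) 0 with h | h
    · rw [max_eq_right h, max_eq_left (by linarith)]; ring
    · rw [max_eq_left h, max_eq_right (by linarith)]; ring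
  have hhd : (fun x => h x) = fun x => max (h x - 0) 0 - max (-h x - 0) 0 := by
    funext x; simp only [sub_zero]; rcases le_total (h x) 0 with h' | h'
    · rw [max_eq_right h', max_eq_left (by linarith)]; ring
    · rw [max_eq_left h', max_eq_right (by linarith)]; ring
  rw [hgd, hhd,
    integral_sub (by simpa using hgi.pos_part) (by simpa using hgi.neg.pos_part),
    integral_sub (by simpa using hhi.pos_part) (by simpa using hhi.neg.pos_part),
    integral_posPart_eq_of_dist hg hh hdist 0,
    integral_posPart_eq_of_dist (g := fun x => -g x) (h := fun x => -h x) hg.neg hh.neg hneg 0]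

open scoped NNReal

lemma normalize_lip {E : Type*} [NormedAddCommGroup E] [NormedSpace ℝ E] :
    ∀ x y : E, 1 ≤ ‖x‖ → 1 ≤ ‖y‖ → ‖‖x‖⁻¹ • x - ‖y‖⁻¹ • y‖ ≤ 2 * ‖x - y‖ := by
  intro x y hx hy
  have hx0 : (0:ℝ) < ‖x‖ := lt_of_lt_of_le one_pos hx
  have hy0 : (0:ℝ) < ‖y‖ := lt_of_lt_of_le one_pos hy
  have hid : ‖x‖⁻¹ • x - ‖y‖⁻¹ • y = ‖x‖⁻¹ • (x - y) + (‖x‖⁻¹ - ‖y‖⁻¹) • y := by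
    rw [smul_sub, sub_smul]; abel
  rw [hid]
  have h1 : ‖‖x‖⁻¹ • (x - y)‖ ≤ ‖x - y‖ := by
    rw [norm_smul, Real.norm_eq_abs, abs_of_pos (inv_pos.2 hx0)]
    have hinv : ‖x‖⁻¹ ≤ 1 := by
      rw [← one_div]
      exact div_le_one_of_le₀ hx (norm_nonneg _)
    calc ‖x‖⁻¹ * ‖x - y‖ ≤ 1 * ‖x - y‖ :=
          mul_le_mul_of_nonneg_right hinv (norm_nonneg _)
      _ = ‖x - y‖ := one_mul _
  have h2 : ‖(‖x‖⁻¹ - ‖y‖⁻¹) • y‖ ≤ ‖x - y‖ := by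
    rw [norm_smul, Real.norm_eq_abs]
    have e : ‖x‖⁻¹ - ‖y‖⁻¹ = (‖y‖ - ‖x‖) / (‖x‖ * ‖y‖) := by
      field_simp
    rw [e, abs_div, abs_mul, abs_of_pos hx0, abs_of_pos hy0]
    have h3 : |‖y‖ - ‖x‖| ≤ ‖x - y‖ := by
      rw [norm_sub_rev]; exact abs_norm_sub_norm_le y x
    have h4 : |‖y‖ - ‖x‖| / (‖x‖ * ‖y‖) * ‖y‖ = |‖y‖ - ‖x‖| / ‖x‖ := by
      field_simp
    rw [h4]
    calc |‖y‖ - ‖x‖| / ‖x‖ ≤ |‖y‖ - ‖x‖| / 1 :=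
          div_le_div_of_nonneg_left (abs_nonneg _) one_pos hx
      _ = |‖y‖ - ‖x‖| := div_one _
      _ ≤ ‖x - y‖ := h3
  calc ‖‖x‖⁻¹ • (x - y) + (‖x‖⁻¹ - ‖y‖⁻¹) • y‖
      ≤ ‖‖x‖⁻¹ • (x - y)‖ + ‖(‖x‖⁻¹ - ‖y‖⁻¹) • y‖ := norm_add_le _ _
    _ ≤ 2 * ‖x - y‖ := by linarith

lemma sphMeas_univ_lt_top (d : ℕ) (hd : 0 < d) : sphMeas d 1 Set.univ < ⊤ := by
  obtain ⟨m, rfl⟩ : ∃ m, d = m + 1 := ⟨d - 1, (Nat.succ_pred_eq_of_pos hd).symm⟩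
  rw [sphMeas, Measure.restrict_apply MeasurableSet.univ, univ_inter]
  set s : ℝ := ((m + 1 : ℕ) : ℝ) - 1 with hsdef
  have hsm : s = (m : ℝ) := by rw [hsdef]; push_cast; ring
  have hs0 : 0 ≤ s := by rw [hsm]; positivity
  -- coordinate bound
  have hcoord : ∀ (z : Euc (m+1)) (j : Fin (m+1)), |z j| ≤ ‖z‖ := by
    intro z j
    rw [EuclideanSpace.norm_eq]
    have h1 : |z j| = Real.sqrt (‖z j‖^2) := by
      rw [Real.sqrt_sq_eq_abs, Real.norm_eq_abs, abs_abs]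
    rw [h1]
    apply Real.sqrt_le_sqrt
    exact Finset.single_le_sum (f := fun j => ‖z j‖^2) (fun _ _ => sq_nonneg _)
      (Finset.mem_univ j)
  -- faces
  set Fc : Fin (m+1) → Bool → Set (Euc (m+1)) := fun i σ =>
    {x | x i = (if σ then 1 else -1) ∧ ∀ j, |x j| ≤ 1} with hFc
  set r : Euc (m+1) → Euc (m+1) := fun x => ‖x‖⁻¹ • x with hr
  -- covering
  have hcover : sphere (0 : Euc (m+1)) 1 ⊆ ⋃ p : Fin (m+1) × Bool, r '' (Fc p.1 p.2) := by
    intro x hx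
    rw [mem_sphere_zero_iff_norm] at hx
    obtain ⟨i, -, hi⟩ := Finset.exists_max_image (Finset.univ : Finset (Fin (m+1)))
      (fun j => |x j|) Finset.univ_nonempty
    have hcpos : 0 < |x i| := by
      by_contra h0
      push_neg at h0
      have hall : ∀ j : Fin (m+1), ‖x j‖^2 = 0 := by
        intro j
        have := (hi j (Finset.mem_univ j)).trans h0
        have hj0 : x j = 0 := abs_nonpos_iff.mp this
        rw [hj0]; simp
      have hnx : ‖x‖ = 0 := by
        rw [EuclideanSpace.norm_eq, Finset.sum_congr rfl fun j _ => hall j]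
        simp
      rw [hx] at hnx; norm_num at hnx
    refine mem_iUnion.2 ⟨(i, decide (0 < x i)), ⟨|x i|⁻¹ • x, ⟨?_, ?_⟩, ?_⟩⟩
    · show (|x i|⁻¹ • x) i = _
      have happ : (|x i|⁻¹ • x) i = |x i|⁻¹ * x i := rfl
      rw [happ]
      by_cases hpos : 0 < x i
      · rw [if_pos (by simp [hpos]), abs_of_pos hpos, inv_mul_cancel₀ (ne_of_gt hpos)]
      · have hneg : x i < 0 := by
          rcases lt_trichotomy (x i) 0 with h | h | h
          · exact h
          · exfalso; rw [h] at hcpos; simp at hcpos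
          · exact absurd h hpos
        rw [if_neg (by simp [not_lt.2 hneg.le]), abs_of_neg hneg, inv_neg, neg_mul,
          inv_mul_cancel₀ hneg.ne]
    · intro j
      have happ : (|x i|⁻¹ • x) j = |x i|⁻¹ * x j := rfl
      rw [happ, abs_mul, abs_of_pos (inv_pos.2 hcpos)]
      rw [inv_mul_le_iff₀ hcpos, mul_one]
      exact hi j (Finset.mem_univ j)
    · show ‖(|x i|⁻¹ • x)‖⁻¹ • (|x i|⁻¹ • x) = x
      have hnorm : ‖(|x i|⁻¹ • x)‖ = |x i|⁻¹ := by
        rw [norm_smul, hx, mul_one, Real.norm_eq_abs, abs_of_pos (inv_pos.2 hcpos)]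
      rw [hnorm, inv_inv, smul_smul, mul_inv_cancel₀ (ne_of_gt hcpos), one_smul]
  -- normalization is Lipschitz on the faces
  have hrlip : LipschitzOnWith 2 r {x : Euc (m+1) | 1 ≤ ‖x‖} := by
    rw [lipschitzOnWith_iff_dist_le_mul]
    intro x hx y hy
    rw [dist_eq_norm, dist_eq_norm]
    have h := normalize_lip x y hx hy
    have hco : ((2:ℝ≥0) : ℝ) * ‖x - y‖ = 2 * ‖x - y‖ := by norm_num
    rw [hco]
    exact h
  have hFcT : ∀ i σ, Fc i σ ⊆ {x : Euc (m+1) | 1 ≤ ‖x‖} := by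
    rintro i σ z ⟨hz1, _⟩
    have := hcoord z i
    rw [hz1] at this
    have h1 : |if σ = true then (1:ℝ) else -1| = 1 := by
      split <;> norm_num
    rw [h1] at this
    exact this
  -- Hausdorff measure of each face is finite
  have hface : ∀ i σ, μH[s] (Fc i σ) < ⊤ := by
    intro i σ
    set vσ : ℝ := if σ = true then (1:ℝ) else -1 with hvσ
    have hvabs : |vσ| ≤ 1 := by rw [hvσ]; split <;> norm_num
    set e : (Fin (m+1) → ℝ) → Euc (m+1) :=
      fun w => (WithLp.equiv 2 (Fin (m+1) → ℝ)).symm w with he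
    obtain ⟨K, heLip⟩ : ∃ K : ℝ≥0, LipschitzWith K e := by
      refine ⟨(Fintype.card (Fin (m+1)) : ℝ≥0) ^ ((1:ℝ≥0∞) / 2).toReal, fun u v => ?_⟩
      have h := PiLp.antilipschitzWith_ofLp 2 (fun _ : Fin (m+1) => ℝ) (e u) (e v)
      simpa [he] using h
    set box : Set (Fin m → ℝ) := {y | ∀ j, |y j| ≤ 1} with hbox
    set Fcpi : Set (Fin (m+1) → ℝ) := {w | w i = vσ ∧ ∀ j, |w j| ≤ 1} with hFcpi
    have hsub1 : Fc i σ ⊆ e '' Fcpi := by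
      intro z hz
      exact ⟨WithLp.equiv 2 _ z, hz, (WithLp.equiv 2 _).symm_apply_apply z⟩
    have hpieq : Fcpi = Fin.insertNth (α := fun _ : Fin (m+1) => ℝ) i vσ '' box := by
      ext w
      constructor
      · rintro ⟨h1, h2⟩
        refine ⟨Fin.removeNth i w, fun j => h2 _, ?_⟩
        rw [← h1]
        exact Fin.insertNth_self_removeNth (α := fun _ : Fin (m+1) => ℝ) i w
      · rintro ⟨y, hy, rfl⟩
        constructor
        · rw [Fin.insertNth_apply_same]
        · intro j
          by_cases hj : j = i
          · subst hj; rw [Fin.insertNth_apply_same]; exact hvabs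
          · obtain ⟨k, rfl⟩ := Fin.exists_succAbove_eq hj
            rw [Fin.insertNth_apply_succAbove]
            exact hy k
    have hins : Isometry
        (fun y : Fin m → ℝ => Fin.insertNth (α := fun _ : Fin (m+1) => ℝ) i vσ y) := by
      apply Isometry.of_dist_eq
      intro y w
      apply le_antisymm
      · apply (dist_pi_le_iff dist_nonneg).2
        intro j
        by_cases hj : j = i
        · subst hj
          rw [Fin.insertNth_apply_same, Fin.insertNth_apply_same, dist_self]
          exact dist_nonneg
        · obtain ⟨k, rfl⟩ := Fin.exists_succAbove_eq hj
          rw [Fin.insertNth_apply_succAbove, Fin.insertNth_apply_succAbove]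
          exact dist_le_pi_dist y w k
      · apply (dist_pi_le_iff dist_nonneg).2
        intro k
        have h := dist_le_pi_dist (Fin.insertNth (α := fun _ : Fin (m+1) => ℝ) i vσ y)
          (Fin.insertNth (α := fun _ : Fin (m+1) => ℝ) i vσ w) (i.succAbove k)
        rwa [Fin.insertNth_apply_succAbove, Fin.insertNth_apply_succAbove] at h
    have hboxfin : μH[s] box < ⊤ := by
      have hbeq : box = Set.pi univ (fun _ : Fin m => Icc (-1:ℝ) 1) := by
        ext y
        simp only [hbox, Set.mem_setOf_eq, Set.mem_pi, Set.mem_univ, forall_true_left,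
          mem_Icc, abs_le, true_implies]
      have hrw : s = ((Fintype.card (Fin m) : ℕ) : ℝ) := by
        rw [hsm]; simp
      rw [hrw, hausdorffMeasure_pi_real, hbeq]
      exact (isCompact_univ_pi fun _ => isCompact_Icc).measure_lt_top
    calc μH[s] (Fc i σ) ≤ μH[s] (e '' Fcpi) := measure_mono hsub1
      _ ≤ (K : ℝ≥0∞) ^ s * μH[s] Fcpi := heLip.hausdorffMeasure_image_le hs0 Fcpi
      _ = (K : ℝ≥0∞) ^ s * μH[s] box := by
          rw [hpieq, hins.hausdorffMeasure_image (Or.inl hs0)]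
      _ < ⊤ := ENNReal.mul_lt_top
          (ENNReal.rpow_lt_top_of_nonneg hs0 ENNReal.coe_ne_top) hboxfin
  have himg : ∀ i σ, μH[s] (r '' (Fc i σ)) < ⊤ := by
    intro i σ
    calc μH[s] (r '' (Fc i σ)) ≤ ((2:ℝ≥0) : ℝ≥0∞) ^ s * μH[s] (Fc i σ) :=
        (hrlip.mono (hFcT i σ)).hausdorffMeasure_image_le hs0
      _ < ⊤ := ENNReal.mul_lt_top
          (ENNReal.rpow_lt_top_of_nonneg hs0 ENNReal.coe_ne_top) (hface i σ)
  calc μH[s] (sphere (0 : Euc (m+1)) 1)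
      ≤ ∑' p : Fin (m+1) × Bool, μH[s] (r '' (Fc p.1 p.2)) :=
        (measure_mono hcover).trans (measure_iUnion_le _)
    _ < ⊤ := by
        rw [tsum_fintype]
        exact ENNReal.sum_lt_top.2 fun p _ => himg p.1 p.2

end AuxLemmas

/-- Rigidity in the Hardy–Littlewood inequality on the sphere:
if g₂ = g₂^♯ is symmetric decreasing about e₁ with all level sets of measure zero,
g₁ is not a.e. constant, and ∫ g₁g₂ = ∫ g₁^♯ g₂^♯, then g₁ = g₁^♯ (a.e.), i.e. every
superlevel set of g₁ is (up to null sets) a geodesic cap centered at e₁. -/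
theorem stmt11 (d : ℕ) (hd : 0 < d) (g₁ g₂ g₁s : Euc d → ℝ)
    (hm1 : MemLp g₁ 2 (sphMeas d 1)) (hm2 : MemLp g₂ 2 (sphMeas d 1))
    (hg2symm : IsCapSymmSphere d g₂ g₂)
    (hg1nc : ¬ ∃ c : ℝ, g₁ =ᵐ[sphMeas d 1] fun _ => c)
    (hlev : ∀ t : ℝ, sphMeas d 1 {x | g₂ x = t} = 0)
    (hg1s : IsCapSymmSphere d g₁ g₁s)
    (heq : (∫ x, g₁ x * g₂ x ∂(sphMeas d 1)) = ∫ x, g₁s x * g₂ x ∂(sphMeas d 1)) :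
    g₁ =ᵐ[sphMeas d 1] g₁s := by
  classical
  set μ := sphMeas d 1 with hμdef
  set S := sphere (0 : Euc d) 1 with hSdef
  haveI hfin : IsFiniteMeasure μ := ⟨sphMeas_univ_lt_top d hd⟩
  have hSmeas : MeasurableSet S := isClosed_sphere.measurableSet
  have hμS : ∀ᵐ x ∂μ, x ∈ S := ae_restrict_mem hSmeas
  have hμSc : μ Sᶜ = 0 := by
    rw [hμdef, sphMeas, Measure.restrict_apply hSmeas.compl]
    simp [hSdef]
  -- e1 facts
  have he1 : ‖e1 d‖ = 1 := by
    rw [e1, dif_pos hd, EuclideanSpace.norm_single]; norm_num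
  have he1S : e1 d ∈ S := by rw [hSdef, mem_sphere_zero_iff_norm]; exact he1
  have hne1S : -e1 d ∈ S := by
    rw [hSdef, mem_sphere_zero_iff_norm, norm_neg]; exact he1
  have hu1 : ⟪e1 d, e1 d⟫ = 1 := by
    rw [real_inner_self_eq_norm_sq, he1]; norm_num
  have hun : ⟪-e1 d, e1 d⟫ = -1 := by rw [inner_neg_left, hu1]
  have hu_le : ∀ x ∈ S, ⟪x, e1 d⟫ ≤ 1 := by
    intro x hx
    have h := real_inner_le_norm x (e1 d)
    rw [hSdef, mem_sphere_zero_iff_norm] at hx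
    rw [hx, he1] at h; linarith
  have hu_ge : ∀ x ∈ S, (-1:ℝ) ≤ ⟪x, e1 d⟫ := by
    intro x hx
    have h := real_inner_le_norm (-x) (e1 d)
    rw [norm_neg, inner_neg_left] at h
    rw [hSdef, mem_sphere_zero_iff_norm] at hx
    rw [hx, he1] at h; linarith
  -- measurable versions
  set g2b := S.piecewise g₂ (fun _ => 0) with hg2bdef
  set gsb := S.piecewise g₁s (fun _ => 0) with hgsbdef
  have hpm : ∀ (k : Euc d → ℝ),
      (∀ x y : Euc d, x ∈ S → y ∈ S → ⟪x, e1 d⟫ ≤ ⟪y, e1 d⟫ → k x ≤ k y) →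
      Measurable (S.piecewise k (fun _ => 0)) := by
    intro k hk
    apply measurable_of_Ioi
    intro c
    have hum : Measurable fun x : Euc d => ⟪x, e1 d⟫ :=
      (continuous_id.inner continuous_const).measurable
    have hA : MeasurableSet (S ∩ {x | c < k x}) := by
      refine upperSet_measurableSet hSmeas hum inter_subset_left ?_
      rintro x ⟨hxS, hxc⟩ y hyS hxy
      exact ⟨hyS, lt_of_lt_of_le hxc (hk x y hxS hyS hxy)⟩
    have hset : S.piecewise k (fun _ => 0) ⁻¹' Ioi c
        = (S ∩ {x | c < k x}) ∪ (Sᶜ ∩ (if c < 0 then univ else ∅)) := by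
      ext x
      by_cases hx : x ∈ S <;> by_cases hc : c < 0 <;>
        simp [Set.piecewise, hx, hc, mem_preimage, mem_Ioi]
    rw [hset]
    refine hA.union (hSmeas.compl.inter ?_)
    split <;> simp
  have hg2bm : Measurable g2b := hpm g₂ hg2symm.1
  have hgsbm : Measurable gsb := hpm g₁s hg1s.1
  obtain ⟨g1b, hg1bsm, hg1beq⟩ := hm1.aestronglyMeasurable
  have hg1bm : Measurable g1b := hg1bsm.measurable
  have hg2e : g₂ =ᵐ[μ] g2b := hμS.mono fun x hx => (Set.piecewise_eq_of_mem _ _ _ hx).symm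
  have hgse : g₁s =ᵐ[μ] gsb := hμS.mono fun x hx => (Set.piecewise_eq_of_mem _ _ _ hx).symm
  -- distribution equality for measurable versions
  have hsetcongr : ∀ (k k' : Euc d → ℝ), k =ᵐ[μ] k' → ∀ t : ℝ,
      μ {x | t ≤ k x} = μ {x | t ≤ k' x} := by
    intro k k' hkk' t
    apply measure_congr
    filter_upwards [hkk'] with x hx
    simp only [eq_iff_iff]
    show (t ≤ k x) ↔ (t ≤ k' x)
    rw [hx]
  have hdistb : ∀ t : ℝ, μ {x | t ≤ g1b x} = μ {x | t ≤ gsb x} := by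
    intro t
    rw [← hsetcongr g₁ g1b hg1beq t, ← hsetcongr g₁s gsb hgse t]
    exact hg1s.2 t
  -- integrability
  have hg1int : Integrable g₁ μ :=
    memLp_one_iff_integrable.mp (hm1.mono_exponent one_le_two)
  have hg1bi : Integrable g1b μ := hg1int.congr hg1beq
  set M := max |g₁s (e1 d)| |g₁s (-e1 d)| + max |g₂ (e1 d)| |g₂ (-e1 d)| + 1 with hM
  have hbd : ∀ (k : Euc d → ℝ),
      (∀ x y : Euc d, x ∈ S → y ∈ S → ⟪x, e1 d⟫ ≤ ⟪y, e1 d⟫ → k x ≤ k y) →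
      ∀ x, |S.piecewise k (fun _ => 0) x| ≤ max |k (e1 d)| |k (-e1 d)| := by
    intro k hk x
    by_cases hx : x ∈ S
    · rw [Set.piecewise_eq_of_mem _ _ _ hx]
      have h1 : k x ≤ k (e1 d) := hk x (e1 d) hx he1S (by rw [hu1]; exact hu_le x hx)
      have h2 : k (-e1 d) ≤ k x := hk (-e1 d) x hne1S hx (by rw [hun]; exact hu_ge x hx)
      rw [abs_le]
      constructor
      · calc -(max |k (e1 d)| |k (-e1 d)|) ≤ -|k (-e1 d)| := by
              simp [neg_le_neg_iff, le_max_right]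
          _ ≤ k (-e1 d) := neg_abs_le _
          _ ≤ k x := h2
      · calc k x ≤ k (e1 d) := h1
          _ ≤ |k (e1 d)| := le_abs_self _
          _ ≤ max |k (e1 d)| |k (-e1 d)| := le_max_left _ _
    · rw [Set.piecewise_eq_of_notMem _ _ _ hx]
      simpa using le_trans (abs_nonneg (k (e1 d))) (le_max_left _ _)
  have hgsb_bd : ∀ x, |gsb x| ≤ M := by
    intro x
    have h1 := hbd g₁s hg1s.1 x
    have h2 : (0:ℝ) ≤ max |g₂ (e1 d)| |g₂ (-e1 d)| := by positivity
    rw [hM]; linarith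
  have hg2b_bd : ∀ x, |g2b x| ≤ M := by
    intro x
    have h1 := hbd g₂ hg2symm.1 x
    have h2 : (0:ℝ) ≤ max |g₁s (e1 d)| |g₁s (-e1 d)| := by positivity
    rw [hM]; linarith
  have hMpos : (0:ℝ) < M := by
    have h1 : (0:ℝ) ≤ max |g₁s (e1 d)| |g₁s (-e1 d)| := le_trans (abs_nonneg _) (le_max_left _ _)
    have h2 : (0:ℝ) ≤ max |g₂ (e1 d)| |g₂ (-e1 d)| := le_trans (abs_nonneg _) (le_max_left _ _)
    rw [hM]; linarith
  have hgsbi : Integrable gsb μ :=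
    ⟨hgsbm.aestronglyMeasurable, HasFiniteIntegral.of_bounded (C := M)
      (Eventually.of_forall fun x => by rw [Real.norm_eq_abs]; exact hgsb_bd x)⟩
  have hg2bi : Integrable g2b μ :=
    ⟨hg2bm.aestronglyMeasurable, HasFiniteIntegral.of_bounded (C := M)
      (Eventually.of_forall fun x => by rw [Real.norm_eq_abs]; exact hg2b_bd x)⟩
  -- the difference function
  set f := fun x => gsb x - g1b x with hfdef
  have hfm : Measurable f := hgsbm.sub hg1bm
  have hfi : Integrable f μ := hgsbi.sub hg1bi
  have hintf : ∫ x, f x ∂μ = 0 := by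
    rw [hfdef]
    simp only []
    rw [integral_sub hgsbi hg1bi, integral_eq_of_dist hgsbm hg1bm hgsbi hg1bi
      (fun t => (hdistb t).symm), sub_self]
  -- products integrable
  have hprodi : ∀ (k : Euc d → ℝ), Measurable k → Integrable k μ →
      Integrable (fun x => k x * g2b x) μ := by
    intro k hkm hki
    refine Integrable.mono' (hki.abs.const_mul M) (hkm.mul hg2bm).aestronglyMeasurable
      (Eventually.of_forall fun x => ?_)
    rw [Real.norm_eq_abs, abs_mul, mul_comm]
    exact mul_le_mul_of_nonneg_right (hg2b_bd x) (abs_nonneg _)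
  have hprod : ∫ x, g1b x * g2b x ∂μ = ∫ x, gsb x * g2b x ∂μ := by
    have e1' : ∫ x, g1b x * g2b x ∂μ = ∫ x, g₁ x * g₂ x ∂μ :=
      integral_congr_ae ((hg1beq.symm).mul (hg2e.symm))
    have e2' : ∫ x, gsb x * g2b x ∂μ = ∫ x, g₁s x * g₂ x ∂μ :=
      integral_congr_ae ((hgse.symm).mul (hg2e.symm))
    rw [e1', e2', heq]
  have hfg2 : ∫ x, f x * g2b x ∂μ = 0 := by
    have : (fun x => f x * g2b x) = fun x => gsb x * g2b x - g1b x * g2b x := by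
      funext x; rw [hfdef]; ring
    rw [this, integral_sub (hprodi gsb hgsbm hgsbi) (hprodi g1b hg1bm hg1bi), hprod, sub_self]
  -- the superlevel sets of g2b
  have hCm : ∀ t : ℝ, MeasurableSet {x | t < g2b x} :=
    fun t => measurableSet_lt measurable_const hg2bm
  set G : ℝ → ℝ := fun t => ∫ x in {x | t < g2b x}, f x ∂μ with hGdef
  -- bathtub principle
  have bath : ∀ t : ℝ, 0 ≤ G t ∧ (G t = 0 → μ {x | t < g2b x} ≠ 0 → ∃ τ : ℝ,
      (∀ᵐ x ∂μ, t < g2b x → τ ≤ g1b x) ∧ (∀ᵐ x ∂μ, ¬ t < g2b x → g1b x ≤ τ) ∧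
      (∀ x ∈ S, t < g2b x → τ ≤ gsb x) ∧ (∀ x ∈ S, ¬ t < g2b x → gsb x ≤ τ)) := by
    intro t
    set C := {x | t < g2b x} with hCloc
    have hCmeas : MeasurableSet C := hCm t
    by_cases hCμ : μ C = 0
    · have hres : μ.restrict C = 0 := Measure.restrict_eq_zero.mpr hCμ
      constructor
      · have : G t = 0 := by rw [hGdef]; simp only []; rw [hres, integral_zero_measure]
        rw [this]
      · intro _ h; exact absurd hCμ h
    · have hCSne : (C ∩ S).Nonempty := by
        rcases (C ∩ S).eq_empty_or_nonempty with hemp | hne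
        · exfalso
          apply hCμ
          have : C ⊆ Sᶜ := by
            intro x hx hxS
            exact (eq_empty_iff_forall_notMem.1 hemp x) ⟨hx, hxS⟩
          exact measure_mono_null this hμSc
        · exact hne
      set τ := sInf (gsb '' (C ∩ S)) with hτdef
      have hbddb : BddBelow (gsb '' (C ∩ S)) := by
        refine ⟨gsb (-e1 d), ?_⟩
        rintro v ⟨y, hy, rfl⟩
        rw [hgsbdef]
        rw [Set.piecewise_eq_of_mem _ _ _ hne1S, Set.piecewise_eq_of_mem _ _ _ hy.2]
        exact hg1s.1 (-e1 d) y hne1S hy.2 (by rw [hun]; exact hu_ge y hy.2)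
      have hge : ∀ x, x ∈ C → x ∈ S → τ ≤ gsb x :=
        fun x hxC hxS => csInf_le hbddb ⟨x, ⟨hxC, hxS⟩, rfl⟩
      have hle : ∀ x ∈ S, x ∉ C → gsb x ≤ τ := by
        intro x hxS hxC
        apply le_csInf (hCSne.image _)
        rintro v ⟨y, hy, rfl⟩
        rcases le_total ⟪x, e1 d⟫ ⟪y, e1 d⟫ with h | h
        · rw [hgsbdef, Set.piecewise_eq_of_mem _ _ _ hxS, Set.piecewise_eq_of_mem _ _ _ hy.2]
          exact hg1s.1 x y hxS hy.2 h
        · exfalso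
          apply hxC
          have hyx : g₂ y ≤ g₂ x := hg2symm.1 y x hy.2 hxS h
          have hyC : t < g2b y := hy.1
          rw [hg2bdef, Set.piecewise_eq_of_mem _ _ _ hy.2] at hyC
          show t < g2b x
          rw [hg2bdef, Set.piecewise_eq_of_mem _ _ _ hxS]
          linarith
      have hind : ∀ x ∈ S, C.indicator (fun y => gsb y - τ) x = max (gsb x - τ) 0 := by
        intro x hxS
        by_cases hxC : x ∈ C
        · rw [indicator_of_mem hxC, eq_comm, max_eq_left]
          have := hge x hxC hxS; linarith
        · rw [indicator_of_notMem hxC, eq_comm, max_eq_right]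
          have := hle x hxS hxC; linarith
      have hIg : IntegrableOn (fun x => g1b x - τ) C μ :=
        (hg1bi.sub (integrable_const τ)).integrableOn
      have hIs : IntegrableOn (fun x => gsb x - τ) C μ :=
        (hgsbi.sub (integrable_const τ)).integrableOn
      have hposint : Integrable (fun x => max (g1b x - τ) 0) μ := by
        simpa using (hg1bi.sub (integrable_const τ)).pos_part
      have e1' : ∫ x in C, (gsb x - τ) ∂μ = ∫ x, max (gsb x - τ) 0 ∂μ := by
        rw [← integral_indicator hCmeas]
        exact integral_congr_ae (hμS.mono fun x hx => hind x hx)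
      have e2 : ∫ x, max (gsb x - τ) 0 ∂μ = ∫ x, max (g1b x - τ) 0 ∂μ :=
        integral_posPart_eq_of_dist hgsbm hg1bm (fun u => (hdistb u).symm) τ
      have e3 : ∫ x in C, (g1b x - τ) ∂μ ≤ ∫ x in C, max (g1b x - τ) 0 ∂μ :=
        integral_mono hIg hposint.integrableOn (fun x => le_max_left _ _)
      have e4 : ∫ x in C, max (g1b x - τ) 0 ∂μ ≤ ∫ x, max (g1b x - τ) 0 ∂μ :=
        setIntegral_le_integral hposint (Eventually.of_forall fun x => le_max_right _ _)
      have hGt : G t = ∫ x in C, (gsb x - τ) ∂μ - ∫ x in C, (g1b x - τ) ∂μ := by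
        rw [hGdef]
        simp only []
        rw [← integral_sub hIs hIg]
        exact integral_congr_ae (Eventually.of_forall fun x => by
          simp only [hfdef]; ring)
      constructor
      · rw [hGt, e1', e2]
        linarith [e3.trans e4]
      · intro hG0 _
        have heq2 : ∫ x in C, (g1b x - τ) ∂μ = ∫ x, max (g1b x - τ) 0 ∂μ := by
          rw [hGt, e1', e2] at hG0
          linarith
        have hCeq : ∫ x in C, max (g1b x - τ) 0 ∂μ = ∫ x in C, (g1b x - τ) ∂μ :=
          le_antisymm (by rw [← heq2] at e4; exact e4) e3
        refine ⟨τ, ?_, ?_, fun x hx hxC => hge x hxC hx, fun x hx hxC => hle x hx hxC⟩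
        · have hdiff0 : ∫ x in C, (max (g1b x - τ) 0 - (g1b x - τ)) ∂μ = 0 := by
            rw [integral_sub hposint.integrableOn hIg, hCeq, sub_self]
          have hnn : (0 : Euc d → ℝ) ≤ fun x => max (g1b x - τ) 0 - (g1b x - τ) := by
            intro x
            simp only [Pi.zero_apply, sub_nonneg]
            exact le_max_left _ _
          have hint : Integrable (fun x => max (g1b x - τ) 0 - (g1b x - τ)) (μ.restrict C) :=
            hposint.integrableOn.sub hIg
          have hae0 := (integral_eq_zero_iff_of_nonneg hnn hint).mp hdiff0
          have hres := (ae_restrict_iff' hCmeas).mp hae0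
          filter_upwards [hres] with x hx hxC
          have h0 : max (g1b x - τ) 0 - (g1b x - τ) = 0 := by simpa using hx hxC
          have h2 : (0:ℝ) ≤ max (g1b x - τ) 0 := le_max_right _ _
          linarith
        · have hcomp0 : ∫ x in Cᶜ, max (g1b x - τ) 0 ∂μ = 0 := by
            have hsplit := integral_add_compl hCmeas hposint
            rw [hCeq, heq2] at hsplit
            linarith
          have hnn : (0 : Euc d → ℝ) ≤ fun x => max (g1b x - τ) 0 := fun x => le_max_right _ _
          have hae0 := (integral_eq_zero_iff_of_nonneg hnn hposint.integrableOn).mp hcomp0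
          have hres := (ae_restrict_iff' hCmeas.compl).mp hae0
          filter_upwards [hres] with x hx hxC
          have h0 : max (g1b x - τ) 0 = 0 := by simpa using hx hxC
          have h2 : g1b x - τ ≤ max (g1b x - τ) 0 := le_max_left _ _
          linarith
  -- Fubini: ∫ G = ∫ f * g2b = 0
  have hGint : Integrable G volume ∧ ∫ t, G t = 0 := by
    set F : Euc d × ℝ → ℝ := fun p =>
      ({q : Euc d × ℝ | 0 ≤ q.2 ∧ q.2 < g2b q.1}.indicator (fun q => f q.1) p)
      - ({q : Euc d × ℝ | g2b q.1 ≤ q.2 ∧ q.2 < 0}.indicator (fun q => f q.1) p) with hFdef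
    have hm1set : MeasurableSet {q : Euc d × ℝ | 0 ≤ q.2 ∧ q.2 < g2b q.1} :=
      (measurableSet_le measurable_const measurable_snd).inter
        (measurableSet_lt measurable_snd (hg2bm.comp measurable_fst))
    have hm2set : MeasurableSet {q : Euc d × ℝ | g2b q.1 ≤ q.2 ∧ q.2 < 0} :=
      (measurableSet_le (hg2bm.comp measurable_fst) measurable_snd).inter
        (measurableSet_lt measurable_snd measurable_const)
    have hFm : Measurable F :=
      ((hfm.comp measurable_fst).indicator hm1set).sub
        ((hfm.comp measurable_fst).indicator hm2set)
    have hsect : ∀ x : Euc d, (fun t => F (x, t)) =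
        fun t => (Ico (0:ℝ) (g2b x)).indicator (fun _ => f x) t
          - (Ico (g2b x) (0:ℝ)).indicator (fun _ => f x) t := by
      intro x; funext t
      simp only [hFdef, Set.indicator_apply, mem_setOf_eq, mem_Ico]
    have hIci : ∀ (a b c : ℝ), Integrable ((Ico a b).indicator fun _ : ℝ => c) volume := by
      intro a b c
      refine (integrable_indicator_iff measurableSet_Ico).2 ?_
      refine integrableOn_const (ne_of_lt ?_)
      rw [Real.volume_Ico]
      exact ENNReal.ofReal_lt_top
    have hsecti : ∀ x : Euc d, Integrable (fun t => F (x, t)) volume := by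
      intro x
      rw [hsect x]
      exact (hIci 0 (g2b x) (f x)).sub (hIci (g2b x) 0 (f x))
    have hFbd : ∀ (x : Euc d) (t : ℝ),
        ‖F (x, t)‖ ≤ (Icc (-M) M).indicator (fun _ => |f x|) t := by
      intro x t
      rw [Real.norm_eq_abs]
      simp only [hFdef, Set.indicator_apply, mem_setOf_eq, mem_Icc]
      have habs := abs_le.1 (hg2b_bd x)
      by_cases h1 : 0 ≤ t ∧ t < g2b x
      · have h2 : ¬ (g2b x ≤ t ∧ t < 0) := fun h => absurd (lt_of_lt_of_le h1.2 h.1) (lt_irrefl t)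
        have ht : -M ≤ t ∧ t ≤ M := ⟨by linarith [h1.1], by linarith [h1.2]⟩
        simp [h1, h2, ht]
      · by_cases h2 : g2b x ≤ t ∧ t < 0
        · have ht : -M ≤ t ∧ t ≤ M := ⟨by linarith [h2.1], by linarith [h2.2]⟩
          simp [h1, h2, ht]
        · rw [if_neg h1, if_neg h2, sub_zero, abs_zero]
          split_ifs
          · exact abs_nonneg _
          · exact le_rfl
    have hIccInt : ∀ c : ℝ, Integrable ((Icc (-M) M).indicator fun _ : ℝ => c) volume := by
      intro c
      refine (integrable_indicator_iff measurableSet_Icc).2 ?_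
      refine integrableOn_const (ne_of_lt ?_)
      rw [Real.volume_Icc]
      exact ENNReal.ofReal_lt_top
    have hFnormint : ∀ x : Euc d, ∫ t, ‖F (x, t)‖ ≤ |f x| * (2*M) := by
      intro x
      calc ∫ t, ‖F (x, t)‖
          ≤ ∫ t, (Icc (-M) M).indicator (fun _ => |f x|) t :=
            integral_mono (hsecti x).norm (hIccInt |f x|) (hFbd x)
        _ = |f x| * (2*M) := by
            rw [integral_indicator measurableSet_Icc, setIntegral_const, measureReal_def, Real.volume_Icc,
              ENNReal.toReal_ofReal (by linarith), smul_eq_mul]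
            ring
    have hFi : Integrable F (μ.prod volume) := by
      refine (integrable_prod_iff hFm.aestronglyMeasurable).2
        ⟨Eventually.of_forall hsecti, ?_⟩
      refine Integrable.mono' (hfi.abs.mul_const (2*M))
        (hFm.norm.stronglyMeasurable.integral_prod_right').aestronglyMeasurable
        (Eventually.of_forall fun x => ?_)
      rw [Real.norm_eq_abs, abs_of_nonneg (integral_nonneg fun t => norm_nonneg _)]
      exact hFnormint x
    have hinner : ∀ x : Euc d, ∫ t, F (x, t) = f x * g2b x := by
      intro x
      rw [hsect x, integral_sub (hIci 0 (g2b x) (f x)) (hIci (g2b x) 0 (f x)),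
        integral_indicator measurableSet_Ico, integral_indicator measurableSet_Ico,
        setIntegral_const, setIntegral_const, measureReal_def, measureReal_def, Real.volume_Ico,
        Real.volume_Ico]
      rcases le_total 0 (g2b x) with h | h
      · rw [ENNReal.toReal_ofReal (by linarith : (0:ℝ) ≤ g2b x - 0),
          ENNReal.ofReal_of_nonpos (by linarith : 0 - g2b x ≤ 0)]
        simp only [smul_eq_mul, ENNReal.toReal_zero, zero_mul, sub_zero]
        ring
      · rw [ENNReal.ofReal_of_nonpos (by linarith : g2b x - 0 ≤ 0),
          ENNReal.toReal_ofReal (by linarith : (0:ℝ) ≤ 0 - g2b x)]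
        simp only [smul_eq_mul, ENNReal.toReal_zero, zero_mul, zero_sub]
        ring
    have houter : ∀ t : ℝ, ∫ x, F (x, t) ∂μ = G t := by
      intro t
      rcases le_or_gt 0 t with h | h
      · have hFt : (fun x => F (x, t)) = {x : Euc d | t < g2b x}.indicator f := by
          funext x
          simp only [hFdef, Set.indicator_apply, mem_setOf_eq]
          by_cases hx : t < g2b x
          · simp [hx, h, not_lt.2 h]
          · simp [hx, h, not_lt.2 h]
        rw [hFt, integral_indicator (hCm t)]
      · have hFt : (fun x => F (x, t)) =
            fun x => - ({x : Euc d | g2b x ≤ t}.indicator f x) := by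
          funext x
          simp only [hFdef, Set.indicator_apply, mem_setOf_eq]
          by_cases hx : g2b x ≤ t
          · simp [hx, h, not_le.2 h]
          · simp [hx, not_le.2 h]
        rw [hFt, integral_neg, integral_indicator (measurableSet_le hg2bm measurable_const)]
        have hcompl : {x : Euc d | g2b x ≤ t} = {x : Euc d | t < g2b x}ᶜ := by
          ext x; simp [not_lt]
        rw [hcompl]
        have hsplit := integral_add_compl (hCm t) hfi
        rw [hintf] at hsplit
        have hGteq : G t = ∫ x in {x | t < g2b x}, f x ∂μ := rfl
        rw [hGteq]
        linarith
    have hGfun : G = fun t => ∫ x, F (x, t) ∂μ := by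
      funext t; rw [houter t]
    constructor
    · rw [hGfun]
      exact hFi.integral_prod_right
    · calc ∫ t, G t = ∫ t, ∫ x, F (x, t) ∂μ := by rw [hGfun]
        _ = ∫ x, (∫ t, F (x, t)) ∂μ :=
            (integral_integral_swap (f := fun x t => F (x, t)) hFi).symm
        _ = ∫ x, f x * g2b x ∂μ := integral_congr_ae (Eventually.of_forall fun x => hinner x)
        _ = 0 := hfg2
  have hGzero : ∀ᵐ t : ℝ, G t = 0 := by
    have h0 := (integral_eq_zero_iff_of_nonneg (fun t => (bath t).1) hGint.1).mp hGint.2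
    filter_upwards [h0] with t ht
    exact ht
  -- level sets of g2b are null
  have hg2lev : ∀ c : ℝ, μ {x | g2b x = c} = 0 := by
    intro c
    have : μ {x | g2b x = c} = μ {x | g₂ x = c} := by
      apply measure_congr
      filter_upwards [hg2e] with x hx
      simp only [eq_iff_iff]
      show (g2b x = c) ↔ (g₂ x = c)
      rw [hx]
    rw [this]; exact hlev c
  -- key claim
  have key : ∀ s : ℝ, μ {x | min (g1b x) (gsb x) < s ∧ s < max (g1b x) (gsb x)} = 0 := by
    intro s
    set A := {x | min (g1b x) (gsb x) < s ∧ s < max (g1b x) (gsb x)} with hAdef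
    by_contra hA0
    set B : ℝ → Set (Euc d) := fun t => A ∩ {x | g2b x < t} with hBdef
    set D : ℝ → Set (Euc d) := fun t => A ∩ {x | t < g2b x} with hDdef
    have hBmono : ∀ {t t' : ℝ}, t ≤ t' → B t ⊆ B t' := by
      intro t t' h x hx; exact ⟨hx.1, lt_of_lt_of_le hx.2 h⟩
    have hDmono : ∀ {t t' : ℝ}, t ≤ t' → D t' ⊆ D t := by
      intro t t' h x hx; exact ⟨hx.1, lt_of_le_of_lt h hx.2⟩
    have hSBne : ∃ t : ℝ, μ (B t) ≠ 0 := by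
      by_contra hcon; push_neg at hcon
      apply hA0
      have hsub : A ⊆ ⋃ n : ℕ, B n := by
        intro x hx
        obtain ⟨n, hn⟩ := exists_nat_gt (g2b x)
        exact mem_iUnion.2 ⟨n, hx, hn⟩
      exact measure_mono_null hsub (measure_iUnion_null fun n => hcon n)
    have hSDne : ∃ t : ℝ, μ (D t) ≠ 0 := by
      by_contra hcon; push_neg at hcon
      apply hA0
      have hsub : A ⊆ ⋃ n : ℕ, D (-(n:ℝ)) := by
        intro x hx
        obtain ⟨n, hn⟩ := exists_nat_gt (-(g2b x))
        exact mem_iUnion.2 ⟨n, hx, by simp only [mem_setOf_eq]; linarith⟩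
      exact measure_mono_null hsub (measure_iUnion_null fun n => hcon _)
    by_cases hcase : ∃ a b : ℝ, a < b ∧ μ (B a) ≠ 0 ∧ μ (D b) ≠ 0
    · obtain ⟨a, b, hab, hBa, hDb⟩ := hcase
      have hover : ¬ (Ioo a b ⊆ {t : ℝ | G t ≠ 0}) := by
        intro hsub
        have h1 : volume {t : ℝ | G t ≠ 0} = 0 := by
          simpa [ae_iff] using hGzero
        have h2 := measure_mono_null hsub h1
        rw [Real.volume_Ioo] at h2
        exact (ENNReal.ofReal_pos.2 (by linarith)).ne' h2
      obtain ⟨t, htI, htG⟩ : ∃ t, t ∈ Ioo a b ∧ G t = 0 := by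
        by_contra hcon; push_neg at hcon
        exact hover fun t ht => hcon t ht
      have hBt : μ (B t) ≠ 0 := fun h => hBa (measure_mono_null (hBmono htI.1.le) h)
      have hDt : μ (D t) ≠ 0 := fun h => hDb (measure_mono_null (hDmono htI.2.le) h)
      have hCt : μ {x | t < g2b x} ≠ 0 := fun h => hDt (measure_mono_null inter_subset_right h)
      obtain ⟨τ, h1, h2, h3, h4⟩ := (bath t).2 htG hCt
      have hpt : ∀ E : Set (Euc d), μ E ≠ 0 → ∃ x, x ∈ E ∧ x ∈ S ∧
          (t < g2b x → τ ≤ g1b x) ∧ (¬ t < g2b x → g1b x ≤ τ) := by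
        intro E hE
        set P := {x : Euc d | x ∈ S ∧ (t < g2b x → τ ≤ g1b x) ∧ (¬ t < g2b x → g1b x ≤ τ)}
          with hP
        have hPc : μ {x | x ∉ P} = 0 := by
          have hae : ∀ᵐ x ∂μ, x ∈ P := by
            filter_upwards [hμS, h1, h2] with x hx hx1 hx2
            exact ⟨hx, hx1, hx2⟩
          simpa [ae_iff] using hae
        rcases (E ∩ P).eq_empty_or_nonempty with hemp | hne
        · exfalso
          apply hE
          refine measure_mono_null ?_ hPc
          intro x hx
          simp only [mem_setOf_eq]
          intro hxP
          exact (eq_empty_iff_forall_notMem.1 hemp x) ⟨hx, hxP⟩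
        · obtain ⟨x, hxE, hxP⟩ := hne
          exact ⟨x, hxE, hxP⟩
      obtain ⟨y, hyD, hyS, hy1, _⟩ := hpt (D t) hDt
      obtain ⟨z, hzB, hzS, _, hz2⟩ := hpt (B t) hBt
      have hyg : t < g2b y := hyD.2
      have hymin : τ ≤ min (g1b y) (gsb y) := le_min (hy1 hyg) (h3 y hyS hyg)
      have hys : min (g1b y) (gsb y) < s := hyD.1.1
      have hzg : ¬ t < g2b z := not_lt.2 hzB.2.le
      have hzmax : max (g1b z) (gsb z) ≤ τ := max_le (hz2 hzg) (h4 z hzS hzg)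
      have hzs : s < max (g1b z) (gsb z) := hzB.1.2
      linarith
    · push_neg at hcase
      obtain ⟨p₀, hp₀⟩ := hSBne
      obtain ⟨q₀, hq₀⟩ := hSDne
      set c := sSup {t : ℝ | μ (D t) ≠ 0} with hc
      have hne : {t : ℝ | μ (D t) ≠ 0}.Nonempty := ⟨q₀, hq₀⟩
      have hbdd : BddAbove {t : ℝ | μ (D t) ≠ 0} := by
        refine ⟨p₀, fun q hq => ?_⟩
        by_contra hqp; push_neg at hqp
        exact hq (hcase p₀ q hqp hp₀)
      have hDnull : ∀ q : ℝ, c < q → μ (D q) = 0 := by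
        intro q hq
        by_contra hq0
        exact absurd (le_csSup hbdd hq0) (not_le.2 hq)
      have hBnull : ∀ q : ℝ, q < c → μ (B q) = 0 := by
        intro q hq
        by_contra hq0
        have hub : ∀ p ∈ {t : ℝ | μ (D t) ≠ 0}, p ≤ q := by
          intro p hp
          by_contra hpq; push_neg at hpq
          exact hp (hcase q p hpq hq0)
        exact absurd (csSup_le hne hub) (not_le.2 hq)
      apply hA0
      have hcover : A ⊆ {x | g2b x = c} ∪
          ((⋃ n : ℕ, B (c - 1/(n+1))) ∪ ⋃ n : ℕ, D (c + 1/(n+1))) := by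
        intro x hx
        rcases lt_trichotomy (g2b x) c with h | h | h
        · obtain ⟨n, hn⟩ := exists_nat_one_div_lt (show (0:ℝ) < c - g2b x by linarith)
          refine Or.inr (Or.inl (mem_iUnion.2 ⟨n, hx, ?_⟩))
          simp only [mem_setOf_eq] at hn ⊢
          push_cast at hn ⊢
          linarith
        · exact Or.inl h
        · obtain ⟨n, hn⟩ := exists_nat_one_div_lt (show (0:ℝ) < g2b x - c by linarith)
          refine Or.inr (Or.inr (mem_iUnion.2 ⟨n, hx, ?_⟩))
          simp only [mem_setOf_eq] at hn ⊢
          push_cast at hn ⊢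
          linarith
      refine measure_mono_null hcover
        (measure_union_null (hg2lev c) (measure_union_null ?_ ?_))
      · refine measure_iUnion_null fun n => hBnull _ ?_
        have h0 : (0:ℝ) < 1/((n:ℝ)+1) := by positivity
        linarith
      · refine measure_iUnion_null fun n => hDnull _ ?_
        have h0 : (0:ℝ) < 1/((n:ℝ)+1) := by positivity
        linarith
  -- conclusion
  have hfinal : ∀ᵐ x ∂μ, g1b x = gsb x := by
    have hsub : {x | g1b x ≠ gsb x} ⊆
        ⋃ q : ℚ, {x | min (g1b x) (gsb x) < (q:ℝ) ∧ (q:ℝ) < max (g1b x) (gsb x)} := by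
      intro x hx
      obtain ⟨q, hq1, hq2⟩ := exists_rat_btwn (min_lt_max.mpr hx)
      exact mem_iUnion.2 ⟨q, hq1, hq2⟩
    have : μ {x | g1b x ≠ gsb x} = 0 :=
      measure_mono_null hsub (measure_iUnion_null fun q => key q)
    exact this
  calc g₁ =ᵐ[μ] g1b := hg1beq
    _ =ᵐ[μ] gsb := hfinal
    _ =ᵐ[μ] g₁s := hgse.symm
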